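/- arXiv:1410.2932 — 2 statements merged into one kernel-verified Lean document; each statement's English description precedes it below -/
import Mathlib

section
/- Let λ be a Young diagram, r ≥ 2, and fix a residue class k mod r and c ∈ ℤ. Call a box (p, q) a k-box if q − p ≡ k − c (mod r), call a k-box of λ k-removable if removing it yields a Young diagram, and call a k-box not in λ k-addable if adding it yields a Young diagram. Let v_j denote the number of boxes (p,q) ∈ λ with q − p ≡ j − c (mod r). Then the number of k-addable boxes minus the number of k-removable boxes equals δ + (v_{k+1} − v_k) + (v_{k−1} − v_k), where δ = 1 if k ≡ c (mod r) and δ = 0 otherwise, and indices of v are taken mod r. -/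
/-- A Young diagram: a finite subset of `(ℕ⁺)²` (here: pairs of naturals with both
coordinates `≥ 1`) closed under componentwise decrease. The box `(i, j)` lies in
row `i` and column `j`. -/
def IsYoung (Y : Finset (ℕ × ℕ)) : Prop :=
  (∀ p ∈ Y, 1 ≤ p.1 ∧ 1 ≤ p.2) ∧
  (∀ p ∈ Y, ∀ q : ℕ × ℕ, 1 ≤ q.1 → 1 ≤ q.2 → q.1 ≤ p.1 → q.2 ≤ p.2 → q ∈ Y)

/-- The number of boxes of `Y` whose residue `q - p` is congruent to `j - c` mod `r`. -/
noncomputable def resCount (r : ℕ) (c : ℤ) (Y : Finset (ℕ × ℕ)) (j : ℤ) : ℕ :=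
  {p : ℕ × ℕ | p ∈ Y ∧ Int.ModEq r ((p.2 : ℤ) - p.1) (j - c)}.ncard

open Classical in
/-- basic ncard step: remove one maybe-member. -/
lemma YD.ncard_diff_singleton_int {α : Type*} (s : Set α) (hs : s.Finite) (a : α) :
    (((s \ {a}).ncard : ℤ)) = s.ncard - (if a ∈ s then 1 else 0) := by
  by_cases h : a ∈ s
  · rw [if_pos h]
    have := Set.ncard_diff_singleton_add_one h hs
    omega
  · rw [if_neg h, Set.diff_singleton_eq_self h, sub_zero]

open Classical in
lemma YD.ncard_step_add {α : Type*} (s t : Set α) (hs : s.Finite) (u v b : α)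
    (huv : u ≠ v) (hbs : b ∉ s) (P : Prop)
    (h : ∀ x, x ∈ t ↔ (x ∈ s ∧ x ≠ u ∧ x ≠ v) ∨ (x = b ∧ P)) :
    (t.ncard : ℤ) = s.ncard - (if u ∈ s then 1 else 0) - (if v ∈ s then 1 else 0)
      + (if P then 1 else 0) := by
  have hd : s \ {u, v} = (s \ {u}) \ {v} := by
    ext x; simp [and_assoc]
  have hdf : (s \ {u, v}).Finite := hs.subset Set.diff_subset
  have hcd : (((s \ {u, v}).ncard : ℤ))
      = s.ncard - (if u ∈ s then 1 else 0) - (if v ∈ s then 1 else 0) := by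
    rw [hd, YD.ncard_diff_singleton_int _ (hs.subset Set.diff_subset) v,
      YD.ncard_diff_singleton_int _ hs u]
    have hvu : v ∈ s \ {u} ↔ v ∈ s := by simp [huv.symm]
    simp only [hvu]
  by_cases hP : P
  · have ht : t = insert b (s \ {u, v}) := by
      ext x
      simp only [h x, Set.mem_insert_iff, Set.mem_diff, Set.mem_insert_iff,
        Set.mem_singleton_iff]
      constructor
      · rintro (⟨hx, h1, h2⟩ | ⟨rfl, -⟩)
        · exact Or.inr ⟨hx, by tauto⟩
        · exact Or.inl rfl
      · rintro (rfl | ⟨hx, hne⟩)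
        · exact Or.inr ⟨rfl, hP⟩
        · exact Or.inl ⟨hx, by tauto⟩
    have hbns : b ∉ s \ {u, v} := fun hb => hbs hb.1
    rw [ht, Set.ncard_insert_of_notMem hbns hdf, if_pos hP]
    push_cast
    omega
  · have ht : t = s \ {u, v} := by
      ext x
      simp only [h x, Set.mem_diff, Set.mem_insert_iff, Set.mem_singleton_iff]
      constructor
      · rintro (⟨hx, h1, h2⟩ | ⟨rfl, hp⟩)
        · exact ⟨hx, by tauto⟩
        · exact absurd hp hP
      · rintro ⟨hx, hne⟩
        exact Or.inl ⟨hx, by tauto⟩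
    rw [ht, hcd, if_neg hP]
    ring

open Classical in
lemma YD.ncard_step_rem {α : Type*} (s t : Set α) (hs : s.Finite) (b w1 w2 : α)
    (hw : w1 ≠ w2) (hb1 : b ≠ w1) (hb2 : b ≠ w2) (h1s : w1 ∉ s) (h2s : w2 ∉ s)
    (P1 P2 : Prop)
    (h : ∀ x, x ∈ t ↔ (x ∈ s ∧ x ≠ b) ∨ (x = w1 ∧ P1) ∨ (x = w2 ∧ P2)) :
    (t.ncard : ℤ) = s.ncard - (if b ∈ s then 1 else 0)
      + (if P1 then 1 else 0) + (if P2 then 1 else 0) := by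
  have hdf : (s \ {b}).Finite := hs.subset Set.diff_subset
  have hcd := YD.ncard_diff_singleton_int s hs b
  by_cases hP1 : P1 <;> by_cases hP2 : P2
  · have ht : t = insert w1 (insert w2 (s \ {b})) := by
      ext x
      simp only [h x, Set.mem_insert_iff, Set.mem_diff, Set.mem_singleton_iff]
      constructor
      · rintro (⟨hx, hne⟩ | ⟨rfl, -⟩ | ⟨rfl, -⟩) <;> tauto
      · rintro (rfl | rfl | ⟨hx, hne⟩) <;> tauto
    have h2' : w2 ∉ s \ {b} := fun hx => h2s hx.1
    have h1' : w1 ∉ insert w2 (s \ {b}) := by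
      simp only [Set.mem_insert_iff]
      rintro (rfl | hx)
      · exact hw rfl
      · exact h1s hx.1
    rw [ht, Set.ncard_insert_of_notMem h1' ((hdf.insert w2)),
      Set.ncard_insert_of_notMem h2' hdf, if_pos hP1, if_pos hP2]
    push_cast
    omega
  · have ht : t = insert w1 (s \ {b}) := by
      ext x
      simp only [h x, Set.mem_insert_iff, Set.mem_diff, Set.mem_singleton_iff]
      constructor
      · rintro (⟨hx, hne⟩ | ⟨rfl, -⟩ | ⟨rfl, hp⟩) <;> tauto
      · rintro (rfl | ⟨hx, hne⟩) <;> tauto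
    have h1' : w1 ∉ s \ {b} := fun hx => h1s hx.1
    rw [ht, Set.ncard_insert_of_notMem h1' hdf, if_pos hP1, if_neg hP2]
    push_cast
    omega
  · have ht : t = insert w2 (s \ {b}) := by
      ext x
      simp only [h x, Set.mem_insert_iff, Set.mem_diff, Set.mem_singleton_iff]
      constructor
      · rintro (⟨hx, hne⟩ | ⟨rfl, hp⟩ | ⟨rfl, -⟩) <;> tauto
      · rintro (rfl | ⟨hx, hne⟩) <;> tauto
    have h2' : w2 ∉ s \ {b} := fun hx => h2s hx.1
    rw [ht, Set.ncard_insert_of_notMem h2' hdf, if_pos hP2, if_neg hP1]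
    push_cast
    omega
  · have ht : t = s \ {b} := by
      ext x
      simp only [h x, Set.mem_diff, Set.mem_singleton_iff]
      constructor
      · rintro (⟨hx, hne⟩ | ⟨rfl, hp⟩ | ⟨rfl, hp⟩) <;> tauto
      · rintro ⟨hx, hne⟩; tauto
    rw [ht, hcd, if_neg hP1, if_neg hP2]
    ring

lemma YD.isYoung_insert_iff {Y : Finset (ℕ × ℕ)} (hY : IsYoung Y) {p : ℕ × ℕ}
    (hp : p ∉ Y) :
    IsYoung (insert p Y) ↔
      1 ≤ p.1 ∧ 1 ≤ p.2 ∧ (p.1 = 1 ∨ (p.1 - 1, p.2) ∈ Y) ∧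
        (p.2 = 1 ∨ (p.1, p.2 - 1) ∈ Y) := by
  constructor
  · intro h
    have hc := h.1 p (Finset.mem_insert_self p Y)
    refine ⟨hc.1, hc.2, ?_, ?_⟩
    · rcases Nat.eq_or_lt_of_le hc.1 with h1 | h1
      · exact Or.inl h1.symm
      · refine Or.inr ?_
        have hm : (p.1 - 1, p.2) ∈ insert p Y :=
          h.2 p (Finset.mem_insert_self p Y) (p.1 - 1, p.2) (by omega) hc.2 (by omega) le_rfl
        rcases Finset.mem_insert.1 hm with he | hm
        · exfalso; have := congrArg Prod.fst he; simp at this; omega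
        · exact hm
    · rcases Nat.eq_or_lt_of_le hc.2 with h1 | h1
      · exact Or.inl h1.symm
      · refine Or.inr ?_
        have hm : (p.1, p.2 - 1) ∈ insert p Y :=
          h.2 p (Finset.mem_insert_self p Y) (p.1, p.2 - 1) hc.1 (by omega) le_rfl (by omega)
        rcases Finset.mem_insert.1 hm with he | hm
        · exfalso; have := congrArg Prod.snd he; simp at this; omega
        · exact hm
  · rintro ⟨h1, h2, h3, h4⟩
    constructor
    · intro x hx
      rcases Finset.mem_insert.1 hx with rfl | hx
      · exact ⟨h1, h2⟩
      · exact hY.1 x hx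
    · intro x hx q hq1 hq2 hq3 hq4
      rcases Finset.mem_insert.1 hx with rfl | hx
      · by_cases hqx : q = x
        · exact hqx ▸ Finset.mem_insert_self x Y
        · refine Finset.mem_insert_of_mem ?_
          have : q.1 < x.1 ∨ q.2 < x.2 := by
            rcases Nat.lt_or_ge q.1 x.1 with h | h
            · exact Or.inl h
            · rcases Nat.lt_or_ge q.2 x.2 with h' | h'
              · exact Or.inr h'
              · exact absurd (Prod.ext (le_antisymm hq3 h) (le_antisymm hq4 h')) hqx
          rcases this with h | h
          · rcases h3 with h3 | h3
            · omega
            · exact hY.2 _ h3 q hq1 hq2 (by omega) (by simpa using hq4)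
          · rcases h4 with h4 | h4
            · omega
            · exact hY.2 _ h4 q hq1 hq2 (by simpa using hq3) (by omega)
      · exact Finset.mem_insert_of_mem (hY.2 x hx q hq1 hq2 hq3 hq4)

lemma YD.isYoung_erase_iff {Y : Finset (ℕ × ℕ)} (hY : IsYoung Y) {p : ℕ × ℕ}
    (hp : p ∈ Y) :
    IsYoung (Y.erase p) ↔ (p.1 + 1, p.2) ∉ Y ∧ (p.1, p.2 + 1) ∉ Y := by
  have hc := hY.1 p hp
  constructor
  · intro h
    constructor
    · intro hmem
      have hne : (p.1 + 1, p.2) ≠ p := by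
        intro he; have := congrArg Prod.fst he; simp at this
      have hm : (p.1 + 1, p.2) ∈ Y.erase p := Finset.mem_erase.2 ⟨hne, hmem⟩
      have : p ∈ Y.erase p := h.2 _ hm p hc.1 hc.2 (by omega) le_rfl
      exact (Finset.notMem_erase p Y) this
    · intro hmem
      have hne : (p.1, p.2 + 1) ≠ p := by
        intro he; have := congrArg Prod.snd he; simp at this
      have hm : (p.1, p.2 + 1) ∈ Y.erase p := Finset.mem_erase.2 ⟨hne, hmem⟩
      have : p ∈ Y.erase p := h.2 _ hm p hc.1 hc.2 le_rfl (by omega)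
      exact (Finset.notMem_erase p Y) this
  · rintro ⟨h1, h2⟩
    constructor
    · intro x hx; exact hY.1 x (Finset.mem_of_mem_erase hx)
    · intro x hx q hq1 hq2 hq3 hq4
      have hxY := Finset.mem_of_mem_erase hx
      have hqY := hY.2 x hxY q hq1 hq2 hq3 hq4
      refine Finset.mem_erase.2 ⟨?_, hqY⟩
      rintro rfl
      have hxp : x ≠ q := (Finset.mem_erase.1 hx).1
      have : q.1 < x.1 ∨ q.2 < x.2 := by
        rcases Nat.lt_or_ge q.1 x.1 with h | h
        · exact Or.inl h
        · rcases Nat.lt_or_ge q.2 x.2 with h' | h'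
          · exact Or.inr h'
          · exact absurd (Prod.ext (le_antisymm hq3 h) (le_antisymm hq4 h')).symm hxp
      rcases this with h | h
      · exact h1 (hY.2 x hxY (q.1 + 1, q.2) (by omega) hq2 (by omega) hq4)
      · exact h2 (hY.2 x hxY (q.1, q.2 + 1) hq1 (by omega) hq3 (by omega))

def YD.Ak (r : ℕ) (c k : ℤ) (Y : Finset (ℕ × ℕ)) : Set (ℕ × ℕ) :=
  {p : ℕ × ℕ | p ∉ Y ∧ IsYoung (insert p Y) ∧ Int.ModEq r ((p.2 : ℤ) - p.1) (k - c)}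

def YD.Rk (r : ℕ) (c k : ℤ) (Y : Finset (ℕ × ℕ)) : Set (ℕ × ℕ) :=
  {p : ℕ × ℕ | p ∈ Y ∧ IsYoung (Y.erase p) ∧ Int.ModEq r ((p.2 : ℤ) - p.1) (k - c)}

lemma YD.Ak_finite (r : ℕ) (c k : ℤ) {Y : Finset (ℕ × ℕ)} (hY : IsYoung Y) :
    (YD.Ak r c k Y).Finite := by
  apply Set.Finite.subset (Finset.finite_toSet
    (insert ((1 : ℕ), (1 : ℕ))
      ((Y.image fun b => (b.1 + 1, b.2)) ∪ (Y.image fun b => (b.1, b.2 + 1)))))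
  rintro x ⟨hxY, hxI, -⟩
  rw [YD.isYoung_insert_iff hY hxY] at hxI
  obtain ⟨h1, h2, h3, h4⟩ := hxI
  simp only [Finset.coe_insert, Finset.coe_union, Finset.coe_image, Set.mem_insert_iff,
    Set.mem_union, Set.mem_image]
  rcases h3 with h3 | h3
  · rcases h4 with h4 | h4
    · left
      rw [Prod.ext_iff]
      exact ⟨h3, h4⟩
    · right; right
      refine ⟨(x.1, x.2 - 1), h4, ?_⟩
      rw [Prod.ext_iff]
      constructor
      · rfl
      · simp; omega
  · right; left
    refine ⟨(x.1 - 1, x.2), h3, ?_⟩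
    rw [Prod.ext_iff]
    constructor
    · have := hY.1 _ h3
      simp at this ⊢
      omega
    · rfl

lemma YD.Rk_finite (r : ℕ) (c k : ℤ) (Y : Finset (ℕ × ℕ)) :
    (YD.Rk r c k Y).Finite :=
  Set.Finite.subset (Finset.finite_toSet Y) fun _ hx => hx.1

lemma YD.exists_corner {Y : Finset (ℕ × ℕ)} (hne : Y.Nonempty) :
    ∃ b ∈ Y, (b.1 + 1, b.2) ∉ Y ∧ (b.1, b.2 + 1) ∉ Y := by
  obtain ⟨b, hbY, hmax⟩ := Finset.exists_max_image Y (fun x => x.1 + x.2) hne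
  refine ⟨b, hbY, fun h => ?_, fun h => ?_⟩
  · have := hmax _ h; simp at this
  · have := hmax _ h; simp at this

lemma YD.modEq_conv1 (r : ℕ) (e k c : ℤ) :
    Int.ModEq r e ((k + 1) - c) ↔ Int.ModEq r (e - 1) (k - c) := by
  constructor
  · intro h
    have h2 := Int.ModEq.sub_right 1 h
    have h3 : k + 1 - c - 1 = k - c := by ring
    rwa [h3] at h2
  · intro h
    have h2 := Int.ModEq.add_right 1 h
    have h3 : e - 1 + 1 = e := by ring
    have h4 : k - c + 1 = k + 1 - c := by ring
    rwa [h3, h4] at h2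

lemma YD.modEq_conv2 (r : ℕ) (e k c : ℤ) :
    Int.ModEq r e ((k - 1) - c) ↔ Int.ModEq r (e + 1) (k - c) := by
  constructor
  · intro h
    have h2 := Int.ModEq.add_right 1 h
    have h3 : k - 1 - c + 1 = k - c := by ring
    rwa [h3] at h2
  · intro h
    have h2 := Int.ModEq.sub_right 1 h
    have h3 : e + 1 - 1 = e := by ring
    have h4 : k - c - 1 = k - 1 - c := by ring
    rwa [h3, h4] at h2

lemma YD.resCount_step (r : ℕ) (c : ℤ) {Y : Finset (ℕ × ℕ)} {b : ℕ × ℕ} (hbY : b ∈ Y)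
    (j : ℤ) :
    (resCount r c Y j : ℤ) = resCount r c (Y.erase b) j
      + (if Int.ModEq r ((b.2 : ℤ) - b.1) (j - c) then 1 else 0) := by
  classical
  have hfin : {x : ℕ × ℕ | x ∈ Y.erase b ∧ Int.ModEq r ((x.2 : ℤ) - x.1) (j - c)}.Finite :=
    Set.Finite.subset (Finset.finite_toSet (Y.erase b)) fun _ hx => hx.1
  by_cases hm : Int.ModEq r ((b.2 : ℤ) - b.1) (j - c)
  · rw [if_pos hm]
    have hset : {x : ℕ × ℕ | x ∈ Y ∧ Int.ModEq r ((x.2 : ℤ) - x.1) (j - c)}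
        = insert b {x : ℕ × ℕ | x ∈ Y.erase b ∧ Int.ModEq r ((x.2 : ℤ) - x.1) (j - c)} := by
      ext x
      simp only [Set.mem_setOf_eq, Set.mem_insert_iff, Finset.mem_erase]
      constructor
      · rintro ⟨hxY, hxm⟩
        by_cases hxb : x = b
        · exact Or.inl hxb
        · exact Or.inr ⟨⟨hxb, hxY⟩, hxm⟩
      · rintro (rfl | ⟨⟨-, hxY⟩, hxm⟩)
        · exact ⟨hbY, hm⟩
        · exact ⟨hxY, hxm⟩
    have hbn : b ∉ {x : ℕ × ℕ | x ∈ Y.erase b ∧ Int.ModEq r ((x.2 : ℤ) - x.1) (j - c)} :=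
      fun hx => (Finset.notMem_erase b Y) hx.1
    simp only [resCount]
    rw [hset, Set.ncard_insert_of_notMem hbn hfin]
    push_cast
    ring
  · rw [if_neg hm, add_zero]
    have hset : {x : ℕ × ℕ | x ∈ Y ∧ Int.ModEq r ((x.2 : ℤ) - x.1) (j - c)}
        = {x : ℕ × ℕ | x ∈ Y.erase b ∧ Int.ModEq r ((x.2 : ℤ) - x.1) (j - c)} := by
      ext x
      simp only [Set.mem_setOf_eq, Finset.mem_erase]
      constructor
      · rintro ⟨hxY, hxm⟩
        refine ⟨⟨?_, hxY⟩, hxm⟩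
        rintro rfl
        exact hm hxm
      · rintro ⟨⟨-, hxY⟩, hxm⟩
        exact ⟨hxY, hxm⟩
    simp only [resCount, hset]

set_option maxHeartbeats 3200000 in
lemma YD.main (r : ℕ) (hr : 2 ≤ r) (c : ℤ) :
    ∀ (n : ℕ) (Y : Finset (ℕ × ℕ)), Y.card = n → IsYoung Y → ∀ k : ℤ,
    ((YD.Ak r c k Y).ncard : ℤ) - ((YD.Rk r c k Y).ncard : ℤ)
      = (if Int.ModEq r k c then 1 else 0)
        + ((resCount r c Y (k + 1) : ℤ) - resCount r c Y k)
        + ((resCount r c Y (k - 1) : ℤ) - resCount r c Y k) := by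
  classical
  intro n
  induction n with
  | zero =>
    intro Y hcard hY k
    have hY0 : Y = ∅ := Finset.card_eq_zero.mp hcard
    subst hY0
    have hempty : IsYoung (∅ : Finset (ℕ × ℕ)) := ⟨by simp, by simp⟩
    have hR : YD.Rk r c k ∅ = ∅ := by
      ext x; simp [YD.Rk]
    have hres : ∀ j : ℤ, resCount r c ∅ j = 0 := by
      intro j
      have h0 : {p : ℕ × ℕ | p ∈ (∅ : Finset (ℕ × ℕ)) ∧
          Int.ModEq r ((p.2 : ℤ) - p.1) (j - c)} = ∅ := by
        ext x; simp
      simp [resCount, h0]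
    have hiff : Int.ModEq r (0 : ℤ) (k - c) ↔ Int.ModEq r k c := by
      rw [Int.modEq_iff_dvd, Int.modEq_iff_dvd, sub_zero, dvd_sub_comm]
    have hAk : YD.Ak r c k ∅ = if Int.ModEq r k c then {((1 : ℕ), (1 : ℕ))} else ∅ := by
      ext x
      simp only [YD.Ak, Set.mem_setOf_eq, Finset.notMem_empty, not_false_iff, true_and]
      rw [YD.isYoung_insert_iff hempty (Finset.notMem_empty x)]
      constructor
      · rintro ⟨⟨h1, h2, h3, h4⟩, hm⟩
        simp only [Finset.notMem_empty, or_false] at h3 h4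
        have hx : x = (1, 1) := Prod.ext_iff.2 ⟨h3, h4⟩
        rw [hx] at hm
        simp only [Prod.fst, Prod.snd] at hm
        norm_num at hm
        rw [if_pos (hiff.1 hm)]
        simp [hx]
      · intro hx
        by_cases hm : Int.ModEq r k c
        · rw [if_pos hm] at hx
          simp only [Set.mem_singleton_iff] at hx
          subst hx
          refine ⟨⟨le_rfl, le_rfl, Or.inl rfl, Or.inl rfl⟩, ?_⟩
          norm_num
          exact hiff.2 hm
        · rw [if_neg hm] at hx
          simp at hx
    rw [hR, hAk]
    by_cases hm : Int.ModEq r k c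
    · simp [hm, hres]
    · simp [hm, hres]
  | succ n ih =>
    intro Y hcard hY k
    have hne : Y.Nonempty := Finset.card_pos.mp (by omega)
    obtain ⟨b, hbY, hb1, hb2⟩ := YD.exists_corner hne
    obtain ⟨p, q⟩ := b
    simp only at hb1 hb2
    have hp1 : 1 ≤ p := (hY.1 _ hbY).1
    have hq1 : 1 ≤ q := (hY.1 _ hbY).2
    have hY' : IsYoung (Y.erase (p, q)) := (YD.isYoung_erase_iff hY hbY).2 ⟨hb1, hb2⟩
    have hcard' : (Y.erase (p, q)).card = n := by
      rw [Finset.card_erase_of_mem hbY]; omega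
    have IH := ih (Y.erase (p, q)) hcard' hY' k
    -- names: u = (p, q+1), v = (p+1, q), w1 = (p, q-1), w2 = (p-1, q)
    have hbu : ((p, q) : ℕ × ℕ) ≠ (p, q + 1) := by
      simp [Prod.ext_iff]
    have hbv : ((p, q) : ℕ × ℕ) ≠ (p + 1, q) := by
      simp [Prod.ext_iff]
    have huv : ((p, q + 1) : ℕ × ℕ) ≠ (p + 1, q) := by
      simp [Prod.ext_iff]
    have hw12 : ((p, q - 1) : ℕ × ℕ) ≠ (p - 1, q) := by
      simp [Prod.ext_iff]; intro h; omega
    have hbw1 : ((p, q) : ℕ × ℕ) ≠ (p, q - 1) := by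
      simp [Prod.ext_iff]; omega
    have hbw2 : ((p, q) : ℕ × ℕ) ≠ (p - 1, q) := by
      simp [Prod.ext_iff]; omega
    -- the Ak step
    have hAmem : ∀ x : ℕ × ℕ, x ∈ YD.Ak r c k (Y.erase (p, q)) ↔
        (x ∈ YD.Ak r c k Y ∧ x ≠ (p, q + 1) ∧ x ≠ (p + 1, q)) ∨
        (x = (p, q) ∧ Int.ModEq r ((q : ℤ) - p) (k - c)) := by
      intro x
      simp only [YD.Ak, Set.mem_setOf_eq]
      constructor
      · rintro ⟨hxY', hxI, hxm⟩
        by_cases hxb : x = (p, q)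
        · subst hxb
          right
          exact ⟨rfl, by simpa using hxm⟩
        · have hxY : x ∉ Y := by
            intro h
            exact hxY' (Finset.mem_erase.2 ⟨hxb, h⟩)
          rw [YD.isYoung_insert_iff hY' hxY'] at hxI
          obtain ⟨h1, h2, h3, h4⟩ := hxI
          left
          have hxu : x ≠ (p, q + 1) := by
            rintro rfl
            rcases h4 with h4 | h4
            · have h4' : q + 1 = 1 := h4
              omega
            · have h4' : ((p, q + 1 - 1) : ℕ × ℕ) ∈ Y.erase (p, q) := h4
              have hq' : q + 1 - 1 = q := rfl
              rw [hq'] at h4'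
              exact (Finset.notMem_erase _ _) h4'
          have hxv : x ≠ (p + 1, q) := by
            rintro rfl
            rcases h3 with h3 | h3
            · have h3' : p + 1 = 1 := h3
              omega
            · have h3' : ((p + 1 - 1, q) : ℕ × ℕ) ∈ Y.erase (p, q) := h3
              have hp' : p + 1 - 1 = p := rfl
              rw [hp'] at h3'
              exact (Finset.notMem_erase _ _) h3'
          refine ⟨⟨hxY, (YD.isYoung_insert_iff hY hxY).2 ⟨h1, h2, ?_, ?_⟩, hxm⟩, hxu, hxv⟩
          · rcases h3 with h3 | h3
            · exact Or.inl h3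
            · exact Or.inr (Finset.mem_of_mem_erase h3)
          · rcases h4 with h4 | h4
            · exact Or.inl h4
            · exact Or.inr (Finset.mem_of_mem_erase h4)
      · rintro (⟨⟨hxY, hxI, hxm⟩, hxu, hxv⟩ | ⟨rfl, hm⟩)
        · have hxY' : x ∉ Y.erase (p, q) := fun h => hxY (Finset.mem_of_mem_erase h)
          refine ⟨hxY', ?_, hxm⟩
          rw [YD.isYoung_insert_iff hY hxY] at hxI
          obtain ⟨h1, h2, h3, h4⟩ := hxI
          rw [YD.isYoung_insert_iff hY' hxY']
          refine ⟨h1, h2, ?_, ?_⟩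
          · rcases h3 with h3 | h3
            · exact Or.inl h3
            · refine Or.inr (Finset.mem_erase.2 ⟨?_, h3⟩)
              intro he
              rw [Prod.mk.injEq] at he
              have hcc : 1 ≤ x.1 - 1 := (hY.1 _ h3).1
              exact hxv (Prod.ext_iff.2 ⟨by omega, he.2⟩)
          · rcases h4 with h4 | h4
            · exact Or.inl h4
            · refine Or.inr (Finset.mem_erase.2 ⟨?_, h4⟩)
              intro he
              rw [Prod.mk.injEq] at he
              have hcc : 1 ≤ x.2 - 1 := (hY.1 _ h4).2
              exact hxu (Prod.ext_iff.2 ⟨he.1, by omega⟩)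
        · refine ⟨Finset.notMem_erase _ _, ?_, by simpa using hm⟩
          rw [Finset.insert_erase hbY]
          exact hY
    -- the Rk step
    have hRmem : ∀ x : ℕ × ℕ, x ∈ YD.Rk r c k (Y.erase (p, q)) ↔
        (x ∈ YD.Rk r c k Y ∧ x ≠ (p, q)) ∨
        (x = (p, q - 1) ∧ (2 ≤ q ∧ (p + 1, q - 1) ∉ Y ∧
            Int.ModEq r ((q : ℤ) - p - 1) (k - c))) ∨
        (x = (p - 1, q) ∧ (2 ≤ p ∧ (p - 1, q + 1) ∉ Y ∧
            Int.ModEq r ((q : ℤ) - p + 1) (k - c))) := by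
      intro x
      simp only [YD.Rk, Set.mem_setOf_eq]
      constructor
      · rintro ⟨hxY', hxE, hxm⟩
        rw [YD.isYoung_erase_iff hY' hxY'] at hxE
        obtain ⟨hA, hB⟩ := hxE
        have hxY : x ∈ Y := Finset.mem_of_mem_erase hxY'
        have hxb : x ≠ (p, q) := (Finset.mem_erase.1 hxY').1
        by_cases c1 : (x.1 + 1, x.2) ∈ Y
        · -- x = (p-1, q)
          have he : (x.1 + 1, x.2) = (p, q) := by
            by_contra hne
            exact hA (Finset.mem_erase.2 ⟨hne, c1⟩)
          rw [Prod.mk.injEq] at he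
          have hx1 : 1 ≤ x.1 := (hY.1 _ hxY).1
          right; right
          have hxeq : x = (p - 1, q) := Prod.ext_iff.2 ⟨by omega, he.2⟩
          refine ⟨hxeq, by omega, ?_, ?_⟩
          · intro hmem
            have hne2 : ((p - 1, q + 1) : ℕ × ℕ) ≠ (p, q) := by
              simp [Prod.ext_iff]
            have : ((p - 1, q + 1) : ℕ × ℕ) ∈ Y.erase (p, q) :=
              Finset.mem_erase.2 ⟨hne2, hmem⟩
            have hxx : ((x.1, x.2 + 1) : ℕ × ℕ) = (p - 1, q + 1) := by
              rw [Prod.mk.injEq]; constructor <;> omega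
            rw [← hxx] at this
            exact hB this
          · have hxc : ((x.2 : ℤ) - x.1) = (q : ℤ) - p + 1 := by
              have h1 : x.1 = p - 1 := by omega
              have h2 : x.2 = q := he.2
              rw [h1, h2]
              have : ((p - 1 : ℕ) : ℤ) = (p : ℤ) - 1 := by omega
              rw [this]; ring
            rwa [hxc] at hxm
        · by_cases c2 : (x.1, x.2 + 1) ∈ Y
          · -- x = (p, q-1)
            have he : (x.1, x.2 + 1) = (p, q) := by
              by_contra hne
              exact hB (Finset.mem_erase.2 ⟨hne, c2⟩)
            rw [Prod.mk.injEq] at he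
            have hx2 : 1 ≤ x.2 := (hY.1 _ hxY).2
            right; left
            have hxeq : x = (p, q - 1) := Prod.ext_iff.2 ⟨he.1, by omega⟩
            refine ⟨hxeq, by omega, ?_, ?_⟩
            · intro hmem
              have hne2 : ((p + 1, q - 1) : ℕ × ℕ) ≠ (p, q) := by
                simp [Prod.ext_iff]
              have : ((p + 1, q - 1) : ℕ × ℕ) ∈ Y.erase (p, q) :=
                Finset.mem_erase.2 ⟨hne2, hmem⟩
              have hxx : ((x.1 + 1, x.2) : ℕ × ℕ) = (p + 1, q - 1) := by
                rw [Prod.mk.injEq]; constructor <;> omega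
              rw [← hxx] at this
              exact hA this
            · have hxc : ((x.2 : ℤ) - x.1) = (q : ℤ) - p - 1 := by
                have h1 : x.1 = p := he.1
                have h2 : x.2 = q - 1 := by omega
                rw [h1, h2]
                have : ((q - 1 : ℕ) : ℤ) = (q : ℤ) - 1 := by omega
                rw [this]; ring
              rwa [hxc] at hxm
          · left
            refine ⟨⟨hxY, (YD.isYoung_erase_iff hY hxY).2 ⟨c1, c2⟩, hxm⟩, hxb⟩
      · rintro (⟨⟨hxY, hxE, hxm⟩, hxb⟩ | ⟨rfl, hq2, hnm, hm⟩ | ⟨rfl, hp2, hnm, hm⟩)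
        · have hxY' : x ∈ Y.erase (p, q) := Finset.mem_erase.2 ⟨hxb, hxY⟩
          rw [YD.isYoung_erase_iff hY hxY] at hxE
          refine ⟨hxY', ?_, hxm⟩
          rw [YD.isYoung_erase_iff hY' hxY']
          exact ⟨fun h => hxE.1 (Finset.mem_of_mem_erase h),
            fun h => hxE.2 (Finset.mem_of_mem_erase h)⟩
        · -- x = (p, q-1)
          have hmem : ((p, q - 1) : ℕ × ℕ) ∈ Y :=
            hY.2 (p, q) hbY (p, q - 1) hp1 (by omega) le_rfl (by omega)
          have hxY' : ((p, q - 1) : ℕ × ℕ) ∈ Y.erase (p, q) :=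
            Finset.mem_erase.2 ⟨hbw1.symm, hmem⟩
          refine ⟨hxY', ?_, ?_⟩
          · rw [YD.isYoung_erase_iff hY' hxY']
            constructor
            · intro h
              have hxx : (((p, q - 1) : ℕ × ℕ).1 + 1, ((p, q - 1) : ℕ × ℕ).2)
                  = ((p + 1, q - 1) : ℕ × ℕ) := rfl
              rw [hxx] at h
              exact hnm (Finset.mem_of_mem_erase h)
            · intro h
              have hxx : (((p, q - 1) : ℕ × ℕ).1, ((p, q - 1) : ℕ × ℕ).2 + 1)
                  = ((p, q) : ℕ × ℕ) := by
                rw [Prod.mk.injEq]; constructor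
                · rfl
                · show q - 1 + 1 = q
                  omega
              rw [hxx] at h
              exact (Finset.notMem_erase _ _) h
          · have hxc : ((((p, q - 1) : ℕ × ℕ).2 : ℤ) - ((p, q - 1) : ℕ × ℕ).1)
                = (q : ℤ) - p - 1 := by
              have : ((q - 1 : ℕ) : ℤ) = (q : ℤ) - 1 := by omega
              show ((q - 1 : ℕ) : ℤ) - (p : ℤ) = (q : ℤ) - p - 1
              rw [this]; ring
            rwa [hxc]
        · -- x = (p-1, q)
          have hmem : ((p - 1, q) : ℕ × ℕ) ∈ Y :=
            hY.2 (p, q) hbY (p - 1, q) (by omega) hq1 (by omega) le_rfl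
          have hxY' : ((p - 1, q) : ℕ × ℕ) ∈ Y.erase (p, q) :=
            Finset.mem_erase.2 ⟨hbw2.symm, hmem⟩
          refine ⟨hxY', ?_, ?_⟩
          · rw [YD.isYoung_erase_iff hY' hxY']
            constructor
            · intro h
              have hxx : (((p - 1, q) : ℕ × ℕ).1 + 1, ((p - 1, q) : ℕ × ℕ).2)
                  = ((p, q) : ℕ × ℕ) := by
                rw [Prod.mk.injEq]; constructor
                · show p - 1 + 1 = p
                  omega
                · rfl
              rw [hxx] at h
              exact (Finset.notMem_erase _ _) h
            · intro h
              have hxx : (((p - 1, q) : ℕ × ℕ).1, ((p - 1, q) : ℕ × ℕ).2 + 1)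
                  = ((p - 1, q + 1) : ℕ × ℕ) := rfl
              rw [hxx] at h
              exact hnm (Finset.mem_of_mem_erase h)
          · have hxc : ((((p - 1, q) : ℕ × ℕ).2 : ℤ) - ((p - 1, q) : ℕ × ℕ).1)
                = (q : ℤ) - p + 1 := by
              have : ((p - 1 : ℕ) : ℤ) = (p : ℤ) - 1 := by omega
              show (q : ℤ) - ((p - 1 : ℕ) : ℤ) = (q : ℤ) - p + 1
              rw [this]; ring
            rwa [hxc]
    -- cardinality bookkeeping
    have hbA : ((p, q) : ℕ × ℕ) ∉ YD.Ak r c k Y := fun h => h.1 hbY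
    have hA := YD.ncard_step_add (YD.Ak r c k Y) (YD.Ak r c k (Y.erase (p, q)))
      (YD.Ak_finite r c k hY) (p, q + 1) (p + 1, q) (p, q) huv hbA
      (Int.ModEq r ((q : ℤ) - p) (k - c)) hAmem
    have hw1R : ((p, q - 1) : ℕ × ℕ) ∉ YD.Rk r c k Y := by
      rintro ⟨h1, h2, -⟩
      rw [YD.isYoung_erase_iff hY h1] at h2
      apply h2.2
      have hxx : ((((p, q - 1) : ℕ × ℕ).1, ((p, q - 1) : ℕ × ℕ).2 + 1) : ℕ × ℕ)
          = ((p, q) : ℕ × ℕ) := by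
        rw [Prod.mk.injEq]
        refine ⟨rfl, ?_⟩
        show q - 1 + 1 = q
        omega
      rw [hxx]
      exact hbY
    have hw2R : ((p - 1, q) : ℕ × ℕ) ∉ YD.Rk r c k Y := by
      rintro ⟨h1, h2, -⟩
      rw [YD.isYoung_erase_iff hY h1] at h2
      apply h2.1
      have hxx : ((((p - 1, q) : ℕ × ℕ).1 + 1, ((p - 1, q) : ℕ × ℕ).2) : ℕ × ℕ)
          = ((p, q) : ℕ × ℕ) := by
        rw [Prod.mk.injEq]
        refine ⟨?_, rfl⟩
        show p - 1 + 1 = p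
        omega
      rw [hxx]
      exact hbY
    have hR := YD.ncard_step_rem (YD.Rk r c k Y) (YD.Rk r c k (Y.erase (p, q)))
      (YD.Rk_finite r c k Y) (p, q) (p, q - 1) (p - 1, q) hw12 hbw1 hbw2 hw1R hw2R
      _ _ hRmem
    have hbmem : (((p, q) : ℕ × ℕ) ∈ YD.Rk r c k Y) ↔
        Int.ModEq r ((q : ℤ) - p) (k - c) := by
      constructor
      · rintro ⟨-, -, hm⟩
        exact hm
      · intro hm
        exact ⟨hbY, (YD.isYoung_erase_iff hY hbY).2 ⟨hb1, hb2⟩, hm⟩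
    have hR0 : (if ((p, q) : ℕ × ℕ) ∈ YD.Rk r c k Y then (1 : ℤ) else 0)
        = (if Int.ModEq r ((q : ℤ) - p) (k - c) then 1 else 0) := by
      by_cases hm : Int.ModEq r ((q : ℤ) - p) (k - c)
      · rw [if_pos (hbmem.2 hm), if_pos hm]
      · rw [if_neg (fun h => hm (hbmem.1 h)), if_neg hm]
    -- addability of the two neighbours
    have hu_mem : (((p, q + 1) : ℕ × ℕ) ∈ YD.Ak r c k Y) ↔
        ((p = 1 ∨ (p - 1, q + 1) ∈ Y) ∧ Int.ModEq r ((q : ℤ) - p + 1) (k - c)) := by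
      constructor
      · rintro ⟨-, hI, hm⟩
        rw [YD.isYoung_insert_iff hY hb2] at hI
        obtain ⟨-, -, h3, -⟩ := hI
        refine ⟨h3, ?_⟩
        have hm' : Int.ModEq r (((q + 1 : ℕ) : ℤ) - (p : ℤ)) (k - c) := hm
        have hc : ((q + 1 : ℕ) : ℤ) - (p : ℤ) = (q : ℤ) - p + 1 := by push_cast; ring
        rwa [hc] at hm'
      · rintro ⟨h3, hm⟩
        refine ⟨hb2, ?_, ?_⟩
        · rw [YD.isYoung_insert_iff hY hb2]
          exact ⟨hp1, Nat.le_add_left 1 q, h3, Or.inr hbY⟩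
        · show Int.ModEq r (((q + 1 : ℕ) : ℤ) - (p : ℤ)) (k - c)
          have hc : ((q + 1 : ℕ) : ℤ) - (p : ℤ) = (q : ℤ) - p + 1 := by push_cast; ring
          rw [hc]
          exact hm
    have hv_mem : (((p + 1, q) : ℕ × ℕ) ∈ YD.Ak r c k Y) ↔
        ((q = 1 ∨ (p + 1, q - 1) ∈ Y) ∧ Int.ModEq r ((q : ℤ) - p - 1) (k - c)) := by
      constructor
      · rintro ⟨-, hI, hm⟩
        rw [YD.isYoung_insert_iff hY hb1] at hI
        obtain ⟨-, -, -, h4⟩ := hI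
        refine ⟨h4, ?_⟩
        have hm' : Int.ModEq r (((q : ℕ) : ℤ) - ((p + 1 : ℕ) : ℤ)) (k - c) := hm
        have hc : ((q : ℕ) : ℤ) - ((p + 1 : ℕ) : ℤ) = (q : ℤ) - p - 1 := by push_cast; ring
        rwa [hc] at hm'
      · rintro ⟨h4, hm⟩
        refine ⟨hb1, ?_, ?_⟩
        · rw [YD.isYoung_insert_iff hY hb1]
          exact ⟨Nat.le_add_left 1 p, hq1, Or.inr hbY, h4⟩
        · show Int.ModEq r (((q : ℕ) : ℤ) - ((p + 1 : ℕ) : ℤ)) (k - c)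
          have hc : ((q : ℕ) : ℤ) - ((p + 1 : ℕ) : ℤ) = (q : ℤ) - p - 1 := by push_cast; ring
          rw [hc]
          exact hm
    -- the two "exactly one" identities
    have hL1 : (if ((p, q + 1) : ℕ × ℕ) ∈ YD.Ak r c k Y then (1 : ℤ) else 0)
        + (if (2 ≤ p ∧ (p - 1, q + 1) ∉ Y ∧ Int.ModEq r ((q : ℤ) - p + 1) (k - c))
            then (1 : ℤ) else 0)
        = (if Int.ModEq r ((q : ℤ) - p + 1) (k - c) then (1 : ℤ) else 0) := by
      by_cases hm : Int.ModEq r ((q : ℤ) - p + 1) (k - c)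
      · by_cases hmem : p = 1 ∨ (p - 1, q + 1) ∈ Y
        · have hns : ¬(2 ≤ p ∧ (p - 1, q + 1) ∉ Y ∧
              Int.ModEq r ((q : ℤ) - p + 1) (k - c)) := by
            rintro ⟨h2p, hnm, -⟩
            rcases hmem with h | h
            · omega
            · exact hnm h
          rw [if_pos (hu_mem.2 ⟨hmem, hm⟩), if_neg hns, if_pos hm]
          norm_num
        · push_neg at hmem
          rw [if_neg (fun h => hmem.2 (((hu_mem.1 h).1).resolve_left hmem.1)),
            if_pos ⟨by omega, hmem.2, hm⟩, if_pos hm]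
          norm_num
      · rw [if_neg (fun h => hm (hu_mem.1 h).2), if_neg (fun h => hm h.2.2), if_neg hm]
        norm_num
    have hL2 : (if ((p + 1, q) : ℕ × ℕ) ∈ YD.Ak r c k Y then (1 : ℤ) else 0)
        + (if (2 ≤ q ∧ (p + 1, q - 1) ∉ Y ∧ Int.ModEq r ((q : ℤ) - p - 1) (k - c))
            then (1 : ℤ) else 0)
        = (if Int.ModEq r ((q : ℤ) - p - 1) (k - c) then (1 : ℤ) else 0) := by
      by_cases hm : Int.ModEq r ((q : ℤ) - p - 1) (k - c)
      · by_cases hmem : q = 1 ∨ (p + 1, q - 1) ∈ Y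
        · have hns : ¬(2 ≤ q ∧ (p + 1, q - 1) ∉ Y ∧
              Int.ModEq r ((q : ℤ) - p - 1) (k - c)) := by
            rintro ⟨h2q, hnm, -⟩
            rcases hmem with h | h
            · omega
            · exact hnm h
          rw [if_pos (hv_mem.2 ⟨hmem, hm⟩), if_neg hns, if_pos hm]
          norm_num
        · push_neg at hmem
          rw [if_neg (fun h => hmem.2 (((hv_mem.1 h).1).resolve_left hmem.1)),
            if_pos ⟨by omega, hmem.2, hm⟩, if_pos hm]
          norm_num
      · rw [if_neg (fun h => hm (hv_mem.1 h).2), if_neg (fun h => hm h.2.2), if_neg hm]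
        norm_num
    -- resCount bookkeeping
    have hres0 : (resCount r c Y k : ℤ) = resCount r c (Y.erase (p, q)) k
        + (if Int.ModEq r ((q : ℤ) - p) (k - c) then 1 else 0) :=
      YD.resCount_step r c hbY k
    have hresp0 : (resCount r c Y (k + 1) : ℤ) = resCount r c (Y.erase (p, q)) (k + 1)
        + (if Int.ModEq r ((q : ℤ) - p) (k + 1 - c) then 1 else 0) :=
      YD.resCount_step r c hbY (k + 1)
    have hresm0 : (resCount r c Y (k - 1) : ℤ) = resCount r c (Y.erase (p, q)) (k - 1)
        + (if Int.ModEq r ((q : ℤ) - p) (k - 1 - c) then 1 else 0) :=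
      YD.resCount_step r c hbY (k - 1)
    have hconvp : (if Int.ModEq r ((q : ℤ) - p) (k + 1 - c) then (1 : ℤ) else 0)
        = (if Int.ModEq r ((q : ℤ) - p - 1) (k - c) then (1 : ℤ) else 0) := by
      by_cases hm : Int.ModEq r ((q : ℤ) - p - 1) (k - c)
      · rw [if_pos ((YD.modEq_conv1 r ((q : ℤ) - p) k c).2 hm), if_pos hm]
      · rw [if_neg (fun h => hm ((YD.modEq_conv1 r ((q : ℤ) - p) k c).1 h)), if_neg hm]
    have hconvm : (if Int.ModEq r ((q : ℤ) - p) (k - 1 - c) then (1 : ℤ) else 0)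
        = (if Int.ModEq r ((q : ℤ) - p + 1) (k - c) then (1 : ℤ) else 0) := by
      by_cases hm : Int.ModEq r ((q : ℤ) - p + 1) (k - c)
      · rw [if_pos ((YD.modEq_conv2 r ((q : ℤ) - p) k c).2 hm), if_pos hm]
      · rw [if_neg (fun h => hm ((YD.modEq_conv2 r ((q : ℤ) - p) k c).1 h)), if_neg hm]
    rw [hconvp] at hresp0
    rw [hconvm] at hresm0
    rw [hR0] at hR
    split_ifs at hA hR hL1 hL2 hres0 hresp0 hresm0 IH ⊢ <;> omega

/-- For a Young diagram `λ`, `r ≥ 2`, residue class `k` mod `r` and `c ∈ ℤ`: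
(number of `k`-addable boxes) − (number of `k`-removable boxes)
`= δ + (v_{k+1} − v_k) + (v_{k−1} − v_k)`, where `v_j` counts boxes of residue
`≡ j − c (mod r)`, and `δ = 1` iff `k ≡ c (mod r)`. A box `(p,q)` is a `k`-box if
`q − p ≡ k − c (mod r)`; it is `k`-removable (resp. `k`-addable) if it is a `k`-box
of `λ` (resp. outside `λ`) whose removal (resp. addition) yields a Young diagram. -/
theorem addable_sub_removable_count (r : ℕ) (hr : 2 ≤ r) (c k : ℤ)
    (Y : Finset (ℕ × ℕ)) (hY : IsYoung Y) :
    ({p : ℕ × ℕ | p ∉ Y ∧ IsYoung (insert p Y) ∧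
        Int.ModEq r ((p.2 : ℤ) - p.1) (k - c)}.ncard : ℤ)
      - ({p : ℕ × ℕ | p ∈ Y ∧ IsYoung (Y.erase p) ∧
        Int.ModEq r ((p.2 : ℤ) - p.1) (k - c)}.ncard : ℤ)
      = (if Int.ModEq r k c then 1 else 0)
        + ((resCount r c Y (k + 1) : ℤ) - resCount r c Y k)
        + ((resCount r c Y (k - 1) : ℤ) - resCount r c Y k) := by
  exact YD.main r hr c Y.card Y rfl hY k
end

section
/- In the r-coloured Clifford algebra with anti-commuting colours, the operators E = Σ_{i∈ℤ} ψ(k+ir)ψ*(k+ir+1) and F = Σ_{i∈ℤ} ψ(k+ir+1)ψ*(k+ir) acting on fermionic Fock space F (vector space with basis the semi-infinite monomials) are adjoint with respect to the bilinear form making the semi-infinite monomials an orthonormal basis, and their commutator [E, F] acts diagonally on basis elements. -/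
open scoped Classical

/-- A "Maya diagram": the set of entries of a semi-infinite monomial. A subset `S ⊆ ℤ`
arises as the set of entries of a strictly decreasing integer sequence `i₁ > i₂ > ⋯`
with `i_{n+1} = i_n - 1` eventually iff `S` contains only finitely many positive
integers and omits only finitely many non-positive integers. -/
def MayaP (S : Set ℤ) : Prop :=
  {z ∈ S | 0 < z}.Finite ∧ {z : ℤ | z ≤ 0 ∧ z ∉ S}.Finite

theorem MayaP.insert' {S : Set ℤ} (h : MayaP S) (i : ℤ) : MayaP (insert i S) := by
  constructor
  · apply (h.1.insert i).subset
    rintro z ⟨rfl | hz, hz0⟩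
    · exact Set.mem_insert _ _
    · exact Set.mem_insert_of_mem _ ⟨hz, hz0⟩
  · apply h.2.subset
    rintro z ⟨hz0, hz⟩
    exact ⟨hz0, fun h' => hz (Set.mem_insert_of_mem _ h')⟩

theorem MayaP.diff' {S : Set ℤ} (h : MayaP S) (i : ℤ) : MayaP (S \ {i}) := by
  constructor
  · exact h.1.subset (by rintro z ⟨⟨hz, _⟩, hz0⟩; exact ⟨hz, hz0⟩)
  · apply (h.2.insert i).subset
    rintro z ⟨hz0, hz⟩
    by_cases hzi : z = i
    · exact Or.inl hzi
    · exact Or.inr ⟨hz0, fun h' => hz ⟨h', hzi⟩⟩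

/-- The type of semi-infinite monomials, encoded as Maya diagrams. -/
abbrev Maya := {S : Set ℤ // MayaP S}

/-- Fermionic Fock space: the complex vector space with basis the semi-infinite
monomials. -/
abbrev FSpace := Maya →₀ ℂ

/-- The sign `(-1)^k`, where `k` is the number of entries of the monomial greater
than `i`. -/
noncomputable def sgn (S : Set ℤ) (i : ℤ) : ℂ := (-1) ^ (S ∩ Set.Ioi i).ncard

/-- The wedging operator `ψ(i)`: inserts the entry `i` with sign `(-1)^k` (where `k`
entries precede the insertion point), and is zero if `i` already occurs. -/
noncomputable def psi (i : ℤ) : FSpace →ₗ[ℂ] FSpace :=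
  Finsupp.lift FSpace ℂ Maya fun S =>
    if i ∈ S.1 then 0
    else Finsupp.single ⟨insert i S.1, S.2.insert' i⟩ (sgn S.1 i)

/-- The contracting operator `ψ*(i)`: removes the entry `i` with sign `(-1)^(k-1)`
(where `i` is the `k`-th entry), and is zero if `i` does not occur. -/
noncomputable def psiStar (i : ℤ) : FSpace →ₗ[ℂ] FSpace :=
  Finsupp.lift FSpace ℂ Maya fun S =>
    if i ∈ S.1 then Finsupp.single ⟨S.1 \ {i}, S.2.diff' i⟩ (sgn S.1 i)
    else 0

/-- The charge of a semi-infinite monomial: the unique `c` with `i_n = c - n + 1`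
for `n ≫ 0`. -/
noncomputable def chargeOf (S : Maya) : ℤ :=
  ((S.1 ∩ Set.Ioi 0).ncard : ℤ) - (({z : ℤ | z ≤ 0} \ S.1).ncard : ℤ)

/-- The bilinear form on fermionic Fock space for which the semi-infinite monomials
form an orthonormal basis. -/
noncomputable def bform (f g : FSpace) : ℂ := f.sum fun S a => a * g S

/-- The operator `E = Σ_{i∈ℤ} ψ(k+ir)ψ*(k+ir+1)`, defined on basis elements by a
(locally finite) sum. -/
noncomputable def Eop (r : ℕ) (k : ℤ) : FSpace →ₗ[ℂ] FSpace :=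
  Finsupp.lift FSpace ℂ Maya fun S =>
    ∑ᶠ i : ℤ, psi (k + i * r) (psiStar (k + i * r + 1) (Finsupp.single S 1))

/-- The operator `F = Σ_{i∈ℤ} ψ(k+ir+1)ψ*(k+ir)`, defined on basis elements by a
(locally finite) sum. -/
noncomputable def Fop (r : ℕ) (k : ℤ) : FSpace →ₗ[ℂ] FSpace :=
  Finsupp.lift FSpace ℂ Maya fun S =>
    ∑ᶠ i : ℤ, psi (k + i * r + 1) (psiStar (k + i * r) (Finsupp.single S 1))

/-! ### Auxiliary lemmas -/

section Aux

lemma sgn_sq (S : Set ℤ) (i : ℤ) : sgn S i * sgn S i = 1 := by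
  simp [sgn, ← mul_pow]

lemma psi_single (i : ℤ) (S : Maya) :
    psi i (Finsupp.single S 1) =
      if i ∈ S.1 then 0 else Finsupp.single ⟨insert i S.1, S.2.insert' i⟩ (sgn S.1 i) := by
  rw [psi, Finsupp.lift_apply, Finsupp.sum_single_index] <;> simp

lemma psiStar_single (i : ℤ) (S : Maya) :
    psiStar i (Finsupp.single S 1) =
      if i ∈ S.1 then Finsupp.single ⟨S.1 \ {i}, S.2.diff' i⟩ (sgn S.1 i) else 0 := by
  rw [psiStar, Finsupp.lift_apply, Finsupp.sum_single_index] <;> simp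

lemma psi_psiStar_single (b a : ℤ) (hba : b ≠ a) (S : Maya) :
    psi b (psiStar a (Finsupp.single S 1)) =
      if a ∈ S.1 ∧ b ∉ S.1 then
        Finsupp.single ⟨insert b (S.1 \ {a}), (S.2.diff' a).insert' b⟩
          (sgn S.1 a * sgn (S.1 \ {a}) b)
      else 0 := by
  rw [psiStar_single]
  by_cases ha : a ∈ S.1
  · simp only [ha, if_true, true_and]
    rw [show (Finsupp.single (⟨S.1 \ {a}, S.2.diff' a⟩ : Maya) (sgn S.1 a))
        = sgn S.1 a • Finsupp.single (⟨S.1 \ {a}, S.2.diff' a⟩ : Maya) 1 by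
      rw [Finsupp.smul_single, smul_eq_mul, mul_one]]
    rw [map_smul, psi_single]
    by_cases hb : b ∈ S.1
    · have hb' : b ∈ S.1 \ {a} := ⟨hb, hba⟩
      simp [hb', hb]
    · have hb' : b ∉ S.1 \ {a} := fun h => hb h.1
      simp [hb', hb, Finsupp.smul_single, mul_comm]
  · simp [ha]

lemma sgn_diff_right (S : Set ℤ) (a : ℤ) : sgn (S \ {a + 1}) a = sgn S (a + 1) := by
  unfold sgn
  congr 2
  ext z
  simp only [Set.mem_inter_iff, Set.mem_diff, Set.mem_singleton_iff, Set.mem_Ioi]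
  constructor
  · rintro ⟨⟨h1, h2⟩, h3⟩; exact ⟨h1, by omega⟩
  · rintro ⟨h1, h2⟩; exact ⟨⟨h1, by omega⟩, by omega⟩

lemma sgn_diff_left (S : Set ℤ) (a : ℤ) : sgn (S \ {a}) (a + 1) = sgn S (a + 1) := by
  unfold sgn
  congr 2
  ext z
  simp only [Set.mem_inter_iff, Set.mem_diff, Set.mem_singleton_iff, Set.mem_Ioi]
  constructor
  · rintro ⟨⟨h1, h2⟩, h3⟩; exact ⟨h1, by omega⟩
  · rintro ⟨h1, h2⟩; exact ⟨⟨h1, by omega⟩, by omega⟩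

lemma sgn_shift (S : Set ℤ) (a : ℤ) (h : a + 1 ∉ S) : sgn S a = sgn S (a + 1) := by
  unfold sgn
  congr 2
  ext z
  simp only [Set.mem_inter_iff, Set.mem_Ioi]
  constructor
  · rintro ⟨h1, h2⟩
    refine ⟨h1, ?_⟩
    rcases eq_or_ne z (a + 1) with rfl | hne
    · exact absurd h1 h
    · omega
  · rintro ⟨h1, h2⟩; exact ⟨h1, by omega⟩

/-- The result of applying the `E`-term `ψ(a)ψ*(a+1)` to a monomial. -/
def ESet (a : ℤ) (S : Maya) : Maya :=
  ⟨insert a (S.1 \ {a + 1}), (S.2.diff' _).insert' _⟩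

/-- The result of applying the `F`-term `ψ(a+1)ψ*(a)` to a monomial. -/
def FSet (a : ℤ) (S : Maya) : Maya :=
  ⟨insert (a + 1) (S.1 \ {a}), (S.2.diff' _).insert' _⟩

lemma Et_eq (a : ℤ) (S : Maya) :
    psi a (psiStar (a + 1) (Finsupp.single S 1)) =
      if a + 1 ∈ S.1 ∧ a ∉ S.1 then Finsupp.single (ESet a S) 1 else 0 := by
  rw [psi_psiStar_single a (a + 1) (by omega)]
  split_ifs with h
  · rw [sgn_diff_right, sgn_sq]; rfl
  · rfl

lemma Ft_eq (a : ℤ) (S : Maya) :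
    psi (a + 1) (psiStar a (Finsupp.single S 1)) =
      if a ∈ S.1 ∧ a + 1 ∉ S.1 then Finsupp.single (FSet a S) 1 else 0 := by
  rw [psi_psiStar_single (a + 1) a (by omega)]
  split_ifs with h
  · rw [sgn_diff_left, ← sgn_shift S.1 a h.2, sgn_shift S.1 a h.2, sgn_sq]; rfl
  · rfl

lemma Et_ne_zero_iff (a : ℤ) (S : Maya) :
    psi a (psiStar (a + 1) (Finsupp.single S 1)) ≠ 0 ↔ a + 1 ∈ S.1 ∧ a ∉ S.1 := by
  rw [Et_eq]
  split_ifs with h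
  · simpa [h] using Finsupp.single_ne_zero.mpr (one_ne_zero (α := ℂ))
  · simpa using h

lemma Ft_ne_zero_iff (a : ℤ) (S : Maya) :
    psi (a + 1) (psiStar a (Finsupp.single S 1)) ≠ 0 ↔ a ∈ S.1 ∧ a + 1 ∉ S.1 := by
  rw [Ft_eq]
  split_ifs with h
  · simpa [h] using Finsupp.single_ne_zero.mpr (one_ne_zero (α := ℂ))
  · simpa using h

lemma maya_finE (S : Maya) : {a : ℤ | a + 1 ∈ S.1 ∧ a ∉ S.1}.Finite := by
  apply Set.Finite.subset ((S.2.1.image (fun z => z - 1)).union S.2.2)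
  rintro a ⟨h1, h2⟩
  by_cases h : 0 < a + 1
  · exact Or.inl ⟨a + 1, ⟨h1, h⟩, by ring⟩
  · exact Or.inr ⟨by omega, h2⟩

lemma maya_finF (S : Maya) : {a : ℤ | a ∈ S.1 ∧ a + 1 ∉ S.1}.Finite := by
  apply Set.Finite.subset ((S.2.1.union (S.2.2.image (fun z => z - 1))).union
    (Set.finite_singleton 0))
  rintro a ⟨h1, h2⟩
  by_cases h : 0 < a
  · exact Or.inl (Or.inl ⟨h1, h⟩)
  by_cases h' : a + 1 ≤ 0
  · exact Or.inl (Or.inr ⟨a + 1, ⟨h', h2⟩, by ring⟩)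
  · simp only [Set.mem_union, Set.mem_singleton_iff]
    right; omega

lemma aInj {r : ℕ} (hr : 0 < r) (k : ℤ) :
    Function.Injective (fun i : ℤ => k + i * (r : ℤ)) := by
  intro i j h
  have hr' : (r : ℤ) ≠ 0 := by exact_mod_cast hr.ne'
  have h2 : i * (r : ℤ) = j * r := by
    have := h
    simpa using this
  exact mul_right_cancel₀ hr' h2

lemma Efin {r : ℕ} (hr : 0 < r) (k : ℤ) (S : Maya) :
    {i : ℤ | psi (k + i * r) (psiStar (k + i * r + 1) (Finsupp.single S 1)) ≠ 0}.Finite := by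
  apply Set.Finite.subset (((maya_finE S).preimage ((aInj hr k).injOn))) 
  intro i hi
  exact (Et_ne_zero_iff _ _).mp hi

lemma Ffin {r : ℕ} (hr : 0 < r) (k : ℤ) (S : Maya) :
    {i : ℤ | psi (k + i * r + 1) (psiStar (k + i * r) (Finsupp.single S 1)) ≠ 0}.Finite := by
  apply Set.Finite.subset (((maya_finF S).preimage ((aInj hr k).injOn)))
  intro i hi
  exact (Ft_ne_zero_iff _ _).mp hi

lemma Eop_single (r : ℕ) (k : ℤ) (S : Maya) :
    Eop r k (Finsupp.single S 1)
      = ∑ᶠ i : ℤ, psi (k + i * r) (psiStar (k + i * r + 1) (Finsupp.single S 1)) := by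
  rw [Eop, Finsupp.lift_apply, Finsupp.sum_single_index] <;> simp

lemma Fop_single (r : ℕ) (k : ℤ) (S : Maya) :
    Fop r k (Finsupp.single S 1)
      = ∑ᶠ i : ℤ, psi (k + i * r + 1) (psiStar (k + i * r) (Finsupp.single S 1)) := by
  rw [Fop, Finsupp.lift_apply, Finsupp.sum_single_index] <;> simp

lemma bform_single_left (I : Maya) (g : FSpace) :
    bform (Finsupp.single I 1) g = g I := by
  unfold bform
  rw [Finsupp.sum_single_index] <;> simp

lemma bform_single_right (f : FSpace) (J : Maya) :
    bform f (Finsupp.single J 1) = f J := by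
  simp only [bform, Finsupp.single_apply, mul_ite, mul_one, mul_zero]
  rw [Finsupp.sum_ite_eq, Finsupp.if_mem_support]

/-- Moving one element of a Maya diagram. -/
lemma move {a b : ℤ} (hab : a ≠ b) {X Y : Set ℤ}
    (h1 : a ∈ X) (h2 : b ∉ X) (h3 : Y = insert b (X \ {a})) :
    b ∈ Y ∧ a ∉ Y ∧ X = insert a (Y \ {b}) := by
  subst h3
  refine ⟨Set.mem_insert _ _, ?_, ?_⟩
  · rintro (rfl | ⟨-, ha⟩)
    · exact hab rfl
    · exact ha rfl
  · ext z
    simp only [Set.mem_insert_iff, Set.mem_diff, Set.mem_singleton_iff]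
    constructor
    · intro hz
      by_cases hza : z = a
      · exact Or.inl hza
      · exact Or.inr ⟨Or.inr ⟨hz, hza⟩, fun hb => h2 (hb ▸ hz)⟩
    · rintro (rfl | ⟨(rfl | ⟨hz, -⟩), hzb⟩)
      · exact h1
      · exact absurd rfl hzb
      · exact hz

lemma EF_key (a : ℤ) (I J : Maya) :
    ((a + 1 ∈ I.1 ∧ a ∉ I.1) ∧ ESet a I = J)
      ↔ ((a ∈ J.1 ∧ a + 1 ∉ J.1) ∧ FSet a J = I) := by
  constructor
  · rintro ⟨⟨h1, h2⟩, h3⟩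
    obtain ⟨hm, hd, hs⟩ := move (show a + 1 ≠ a by omega) h1 h2
      (congrArg Subtype.val h3).symm
    exact ⟨⟨hm, hd⟩, Subtype.ext hs.symm⟩
  · rintro ⟨⟨h1, h2⟩, h3⟩
    obtain ⟨hm, hd, hs⟩ := move (show a ≠ a + 1 by omega) h1 h2
      (congrArg Subtype.val h3).symm
    exact ⟨⟨hm, hd⟩, Subtype.ext hs.symm⟩

lemma Et_apply_eq_Ft_apply (a : ℤ) (I J : Maya) :
    (psi a (psiStar (a + 1) (Finsupp.single I 1))) J
      = (psi (a + 1) (psiStar a (Finsupp.single J 1))) I := by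
  have key := EF_key a I J
  rw [Et_eq, Ft_eq]
  by_cases hE : a + 1 ∈ I.1 ∧ a ∉ I.1 <;> by_cases hF : a ∈ J.1 ∧ a + 1 ∉ J.1
  · rw [if_pos hE, if_pos hF, Finsupp.single_apply, Finsupp.single_apply]
    exact if_congr ⟨fun h => (key.mp ⟨hE, h⟩).2, fun h => (key.mpr ⟨hF, h⟩).2⟩ rfl rfl
  · rw [if_pos hE, if_neg hF, Finsupp.single_apply, if_neg (fun h => hF (key.mp ⟨hE, h⟩).1)]
    simp
  · rw [if_neg hE, if_pos hF, Finsupp.single_apply, if_neg (fun h => hE (key.mpr ⟨hF, h⟩).1)]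
    simp
  · rw [if_neg hE, if_neg hF]
    simp

lemma cond_FSet {a b : ℤ} (hab : a ≠ b) {S : Maya}
    (h : a + 1 ∈ (FSet b S).1 ∧ a ∉ (FSet b S).1) : a + 1 ∈ S.1 ∧ a ∉ S.1 := by
  obtain ⟨h1, h2⟩ := h
  simp only [FSet, Set.mem_insert_iff, Set.mem_diff, Set.mem_singleton_iff] at h1 h2
  push_neg at h2
  constructor
  · rcases h1 with h | h
    · exact absurd h (by omega)
    · exact h.1
  · exact fun ha => hab (h2.2 ha)

lemma cond_ESet {a b : ℤ} (hab : a ≠ b) {S : Maya}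
    (h : b ∈ (ESet a S).1 ∧ b + 1 ∉ (ESet a S).1) : b ∈ S.1 ∧ b + 1 ∉ S.1 := by
  obtain ⟨h1, h2⟩ := h
  simp only [ESet, Set.mem_insert_iff, Set.mem_diff, Set.mem_singleton_iff] at h1 h2
  push_neg at h2
  constructor
  · rcases h1 with h | h
    · exact absurd h.symm hab
    · exact h.1
  · intro hb
    have := h2.2 hb
    omega

lemma ite_and_zero {M : Type*} [Zero M] (p q : Prop) [Decidable p] [Decidable q] (x : M) :
    (if p then (if q then x else 0) else 0) = if p ∧ q then x else 0 := by
  by_cases hp : p <;> by_cases hq : q <;> simp [hp, hq]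

lemma EFt_eq (a b : ℤ) (S : Maya) :
    psi a (psiStar (a + 1) (psi (b + 1) (psiStar b (Finsupp.single S 1)))) =
      if b ∈ S.1 ∧ b + 1 ∉ S.1 then
        psi a (psiStar (a + 1) (Finsupp.single (FSet b S) 1)) else 0 := by
  rw [Ft_eq]
  split_ifs with h
  · rfl
  · simp

lemma FEt_eq (a b : ℤ) (S : Maya) :
    psi (b + 1) (psiStar b (psi a (psiStar (a + 1) (Finsupp.single S 1)))) =
      if a + 1 ∈ S.1 ∧ a ∉ S.1 then
        psi (b + 1) (psiStar b (Finsupp.single (ESet a S) 1)) else 0 := by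
  rw [Et_eq]
  split_ifs with h
  · rfl
  · simp

lemma swap_sets {a b : ℤ} (hab : a ≠ b) (S : Set ℤ) :
    insert a ((insert (b + 1) (S \ {b})) \ {a + 1})
      = insert (b + 1) ((insert a (S \ {a + 1})) \ {b}) := by
  ext z
  simp only [Set.mem_insert_iff, Set.mem_diff, Set.mem_singleton_iff]
  constructor
  · rintro (rfl | ⟨(rfl | ⟨hz, hzb⟩), hza1⟩)
    · exact Or.inr ⟨Or.inl rfl, hab⟩
    · exact Or.inl rfl
    · exact Or.inr ⟨Or.inr ⟨hz, hza1⟩, hzb⟩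
  · rintro (rfl | ⟨(rfl | ⟨hz, hza1⟩), hzb⟩)
    · exact Or.inr ⟨Or.inl rfl, by omega⟩
    · exact Or.inl rfl
    · exact Or.inr ⟨Or.inr ⟨hz, hzb⟩, hza1⟩

lemma condL_iff {a b : ℤ} (hab : a ≠ b) (S : Maya) :
    ((b ∈ S.1 ∧ b + 1 ∉ S.1) ∧ (a + 1 ∈ (FSet b S).1 ∧ a ∉ (FSet b S).1))
      ↔ (a + 1 ∈ S.1 ∧ a ∉ S.1 ∧ b ∈ S.1 ∧ b + 1 ∉ S.1 ∧ a + 1 ≠ b ∧ a ≠ b + 1) := by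
  constructor
  · rintro ⟨⟨c3, c4⟩, hm, hn⟩
    simp only [FSet, Set.mem_insert_iff, Set.mem_diff, Set.mem_singleton_iff] at hm hn
    push_neg at hn
    obtain ⟨h6, h7⟩ := hn
    rcases hm with h | ⟨c1, c5⟩
    · exact absurd h (by omega)
    · exact ⟨c1, fun haS => hab (h7 haS), c3, c4, c5, h6⟩
  · rintro ⟨c1, c2, c3, c4, c5, c6⟩
    refine ⟨⟨c3, c4⟩, ?_, ?_⟩ <;>
      simp only [FSet, Set.mem_insert_iff, Set.mem_diff, Set.mem_singleton_iff]
    · exact Or.inr ⟨c1, c5⟩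
    · push_neg
      exact ⟨c6, fun haS => absurd haS c2⟩

lemma condR_iff {a b : ℤ} (hab : a ≠ b) (S : Maya) :
    ((a + 1 ∈ S.1 ∧ a ∉ S.1) ∧ (b ∈ (ESet a S).1 ∧ b + 1 ∉ (ESet a S).1))
      ↔ (a + 1 ∈ S.1 ∧ a ∉ S.1 ∧ b ∈ S.1 ∧ b + 1 ∉ S.1 ∧ a + 1 ≠ b ∧ a ≠ b + 1) := by
  constructor
  · rintro ⟨⟨c1, c2⟩, hm, hn⟩
    simp only [ESet, Set.mem_insert_iff, Set.mem_diff, Set.mem_singleton_iff] at hm hn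
    push_neg at hn
    obtain ⟨h6, h7⟩ := hn
    rcases hm with h | ⟨c3, c5⟩
    · exact absurd h.symm hab
    · refine ⟨c1, c2, c3, fun hb => ?_, Ne.symm c5, Ne.symm h6⟩
      have := h7 hb
      omega
  · rintro ⟨c1, c2, c3, c4, c5, c6⟩
    refine ⟨⟨c1, c2⟩, ?_, ?_⟩ <;>
      simp only [ESet, Set.mem_insert_iff, Set.mem_diff, Set.mem_singleton_iff]
    · exact Or.inr ⟨c3, Ne.symm c5⟩
    · push_neg
      exact ⟨Ne.symm c6, fun hb => absurd hb c4⟩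

lemma cross_comm {a b : ℤ} (hab : a ≠ b) (S : Maya) :
    psi a (psiStar (a + 1) (psi (b + 1) (psiStar b (Finsupp.single S 1)))) =
      psi (b + 1) (psiStar b (psi a (psiStar (a + 1) (Finsupp.single S 1)))) := by
  rw [EFt_eq, FEt_eq, Et_eq, Ft_eq, ite_and_zero, ite_and_zero]
  have hiff := (condL_iff hab S).trans (condR_iff hab S).symm
  by_cases h : (b ∈ S.1 ∧ b + 1 ∉ S.1) ∧ (a + 1 ∈ (FSet b S).1 ∧ a ∉ (FSet b S).1)
  · rw [if_pos h, if_pos (hiff.mp h)]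
    congr 1
    exact Subtype.ext (swap_sets hab S.1)
  · rw [if_neg h, if_neg (fun h' => h (hiff.mpr h'))]

lemma restore1 {a : ℤ} {S : Set ℤ} (h1 : a ∈ S) (h2 : a + 1 ∉ S) :
    insert a ((insert (a + 1) (S \ {a})) \ {a + 1}) = S := by
  ext z
  simp only [Set.mem_insert_iff, Set.mem_diff, Set.mem_singleton_iff]
  constructor
  · rintro (rfl | ⟨(rfl | ⟨hz, -⟩), hza1⟩)
    · exact h1
    · exact absurd rfl hza1
    · exact hz
  · intro hz
    by_cases hza : z = a
    · exact Or.inl hza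
    · exact Or.inr ⟨Or.inr ⟨hz, hza⟩, fun h => h2 (h ▸ hz)⟩

lemma restore2 {a : ℤ} {S : Set ℤ} (h1 : a + 1 ∈ S) (h2 : a ∉ S) :
    insert (a + 1) ((insert a (S \ {a + 1})) \ {a}) = S := by
  ext z
  simp only [Set.mem_insert_iff, Set.mem_diff, Set.mem_singleton_iff]
  constructor
  · rintro (rfl | ⟨(rfl | ⟨hz, -⟩), hza⟩)
    · exact h1
    · exact absurd rfl hza
    · exact hz
  · intro hz
    by_cases hza : z = a + 1
    · exact Or.inl hza
    · exact Or.inr ⟨Or.inr ⟨hz, hza⟩, fun h => h2 (h ▸ hz)⟩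

lemma diag_term (a : ℤ) (S : Maya) :
    psi a (psiStar (a + 1) (psi (a + 1) (psiStar a (Finsupp.single S 1))))
      - psi (a + 1) (psiStar a (psi a (psiStar (a + 1) (Finsupp.single S 1))))
      = ((if a ∈ S.1 ∧ a + 1 ∉ S.1 then 1 else 0)
          - (if a + 1 ∈ S.1 ∧ a ∉ S.1 then 1 else 0) : ℂ) • Finsupp.single S 1 := by
  rw [EFt_eq, FEt_eq, Et_eq, Ft_eq, ite_and_zero, ite_and_zero]
  have hL2 : a + 1 ∈ (FSet a S).1 ∧ a ∉ (FSet a S).1 := by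
    refine ⟨Or.inl rfl, ?_⟩
    rintro (h | ⟨-, h⟩)
    · omega
    · exact h rfl
  have hR2 : a ∈ (ESet a S).1 ∧ a + 1 ∉ (ESet a S).1 := by
    refine ⟨Or.inl rfl, ?_⟩
    rintro (h | ⟨-, h⟩)
    · omega
    · exact h rfl
  by_cases h1 : a ∈ S.1 ∧ a + 1 ∉ S.1 <;> by_cases h2 : a + 1 ∈ S.1 ∧ a ∉ S.1
  · exact absurd h1.1 h2.2
  · rw [if_pos ⟨h1, hL2⟩, if_neg (fun h => h2 h.1), if_pos h1, if_neg h2]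
    have hS : ESet a (FSet a S) = S := Subtype.ext (restore1 h1.1 h1.2)
    rw [hS]
    simp
  · rw [if_neg (fun h => h1 h.1), if_pos ⟨h2, hR2⟩, if_neg h1, if_pos h2]
    have hS : FSet a (ESet a S) = S := Subtype.ext (restore2 h2.1 h2.2)
    rw [hS]
    simp
  · rw [if_neg (fun h => h1 h.1), if_neg (fun h => h2 h.1), if_neg h1, if_neg h2]
    simp

end Aux

/-- The sums defining `E = Σ ψ(k+ir)ψ*(k+ir+1)` and `F = Σ ψ(k+ir+1)ψ*(k+ir)` are
locally finite; `E` and `F` are adjoint with respect to the bilinear form making the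
semi-infinite monomials orthonormal; and the commutator `[E, F]` acts diagonally on
basis elements. -/
theorem E_F_adjoint_and_commutator_diagonal (r : ℕ) (hr : 0 < r) (k : ℤ)
    (hk0 : 0 ≤ k) (hkr : k < r) :
    (∀ S : Maya,
      {i : ℤ | psi (k + i * r) (psiStar (k + i * r + 1) (Finsupp.single S 1)) ≠ 0}.Finite ∧
      {i : ℤ | psi (k + i * r + 1) (psiStar (k + i * r) (Finsupp.single S 1)) ≠ 0}.Finite) ∧
    (∀ I J : Maya,
      bform (Eop r k (Finsupp.single I 1)) (Finsupp.single J 1)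
        = bform (Finsupp.single I 1) (Fop r k (Finsupp.single J 1))) ∧
    (∀ S : Maya, ∃ a : ℂ,
      (Eop r k ∘ₗ Fop r k - Fop r k ∘ₗ Eop r k) (Finsupp.single S 1)
        = a • Finsupp.single S 1) := by
  refine ⟨fun S => ⟨Efin hr k S, Ffin hr k S⟩, ?_, ?_⟩
  · -- adjointness
    intro I J
    rw [bform_single_right, bform_single_left, Eop_single, Fop_single]
    have hI := Efin hr k I
    have hJ := Ffin hr k J
    have e1 : (∑ᶠ i : ℤ,
        psi (k + i * r) (psiStar (k + i * r + 1) (Finsupp.single I 1))) J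
        = ∑ᶠ i : ℤ,
          (psi (k + i * r) (psiStar (k + i * r + 1) (Finsupp.single I 1))) J := by
      rw [finsum_eq_sum_of_support_subset _
        (s := hI.toFinset) (by rw [hI.coe_toFinset]; exact fun i hi => hi),
        Finsupp.finset_sum_apply,
        finsum_eq_sum_of_support_subset _ (s := hI.toFinset)]
      intro i hi
      rw [hI.coe_toFinset]
      intro h0
      exact hi (by simp [h0])
    have e2 : (∑ᶠ i : ℤ,
        psi (k + i * r + 1) (psiStar (k + i * r) (Finsupp.single J 1))) I
        = ∑ᶠ i : ℤ,
          (psi (k + i * r + 1) (psiStar (k + i * r) (Finsupp.single J 1))) I := by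
      rw [finsum_eq_sum_of_support_subset _
        (s := hJ.toFinset) (by rw [hJ.coe_toFinset]; exact fun i hi => hi),
        Finsupp.finset_sum_apply,
        finsum_eq_sum_of_support_subset _ (s := hJ.toFinset)]
      intro i hi
      rw [hJ.coe_toFinset]
      intro h0
      exact hi (by simp [h0])
    rw [e1, e2]
    exact finsum_congr fun i => Et_apply_eq_Ft_apply (k + i * r) I J
  · -- commutator is diagonal
    intro S
    have hA := Efin hr k S
    have hB := Ffin hr k S
    set t : Finset ℤ := (hA.union hB).toFinset with ht
    have htco : ((hA.union hB).toFinset : Set ℤ)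
        = {i : ℤ | psi (k + i * r) (psiStar (k + i * r + 1) (Finsupp.single S 1)) ≠ 0}
          ∪ {i : ℤ | psi (k + i * r + 1) (psiStar (k + i * r) (Finsupp.single S 1)) ≠ 0} :=
      (hA.union hB).coe_toFinset
    -- Step 1: Fop (single S) as a finite sum
    have hFopS : Fop r k (Finsupp.single S 1)
        = ∑ j ∈ t, psi (k + j * r + 1) (psiStar (k + j * r) (Finsupp.single S 1)) := by
      rw [Fop_single, finsum_eq_sum_of_support_subset _ (s := t)]
      rw [ht, htco]
      exact fun i hi => Or.inr hi
    have hEopS : Eop r k (Finsupp.single S 1)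
        = ∑ i ∈ t, psi (k + i * r) (psiStar (k + i * r + 1) (Finsupp.single S 1)) := by
      rw [Eop_single, finsum_eq_sum_of_support_subset _ (s := t)]
      rw [ht, htco]
      exact fun i hi => Or.inl hi
    -- Step 2: applying the other operator to each term
    have key1 : ∀ j ∈ t,
        Eop r k (psi (k + j * r + 1) (psiStar (k + j * r) (Finsupp.single S 1)))
          = ∑ i ∈ t, psi (k + i * r) (psiStar (k + i * r + 1)
              (psi (k + j * r + 1) (psiStar (k + j * r) (Finsupp.single S 1)))) := by
      intro j hj
      rw [show (psi (k + j * r + 1) (psiStar (k + j * r) (Finsupp.single S 1)))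
          = if k + j * r ∈ S.1 ∧ k + j * r + 1 ∉ S.1
            then Finsupp.single (FSet (k + j * r) S) 1 else 0 from Ft_eq _ S]
      split_ifs with h
      · rw [Eop_single, finsum_eq_sum_of_support_subset _ (s := t)]
        intro i hi
        have hne : psi (k + i * r) (psiStar (k + i * r + 1)
            (Finsupp.single (FSet (k + j * r) S) 1)) ≠ 0 := hi
        rw [Et_ne_zero_iff] at hne
        by_cases hij : i = j
        · exact hij ▸ hj
        · have hab : k + i * r ≠ k + j * r := fun hh => hij (aInj hr k hh)
          have := cond_FSet hab hne
          rw [ht, htco]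
          exact Or.inl ((Et_ne_zero_iff _ _).mpr this)
      · simp
    have key2 : ∀ i ∈ t,
        Fop r k (psi (k + i * r) (psiStar (k + i * r + 1) (Finsupp.single S 1)))
          = ∑ j ∈ t, psi (k + j * r + 1) (psiStar (k + j * r)
              (psi (k + i * r) (psiStar (k + i * r + 1) (Finsupp.single S 1)))) := by
      intro i hi
      rw [show (psi (k + i * r) (psiStar (k + i * r + 1) (Finsupp.single S 1)))
          = if k + i * r + 1 ∈ S.1 ∧ k + i * r ∉ S.1
            then Finsupp.single (ESet (k + i * r) S) 1 else 0 from Et_eq _ S]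
      split_ifs with h
      · rw [Fop_single, finsum_eq_sum_of_support_subset _ (s := t)]
        intro j hj
        have hne : psi (k + j * r + 1) (psiStar (k + j * r)
            (Finsupp.single (ESet (k + i * r) S) 1)) ≠ 0 := hj
        rw [Ft_ne_zero_iff] at hne
        by_cases hij : i = j
        · exact hij ▸ hi
        · have hab : k + i * r ≠ k + j * r := fun hh => hij (aInj hr k hh)
          have := cond_ESet hab hne
          rw [ht, htco]
          exact Or.inr ((Ft_ne_zero_iff _ _).mpr this)
      · simp
    -- Step 3: assemble
    refine ⟨∑ j ∈ t, ((if k + j * r ∈ S.1 ∧ k + j * r + 1 ∉ S.1 then 1 else 0)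
        - (if k + j * r + 1 ∈ S.1 ∧ k + j * r ∉ S.1 then 1 else 0) : ℂ), ?_⟩
    rw [LinearMap.sub_apply, LinearMap.comp_apply, LinearMap.comp_apply,
      hFopS, hEopS, map_sum, map_sum]
    rw [Finset.sum_congr rfl key1, Finset.sum_congr rfl key2]
    have inner : ∀ j ∈ t,
        (∑ i ∈ t, psi (k + i * r) (psiStar (k + i * r + 1)
            (psi (k + j * r + 1) (psiStar (k + j * r) (Finsupp.single S 1)))))
          - (∑ i ∈ t, psi (k + j * r + 1) (psiStar (k + j * r)
              (psi (k + i * r) (psiStar (k + i * r + 1) (Finsupp.single S 1)))))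
          = ((if k + j * r ∈ S.1 ∧ k + j * r + 1 ∉ S.1 then 1 else 0)
              - (if k + j * r + 1 ∈ S.1 ∧ k + j * r ∉ S.1 then 1 else 0) : ℂ)
            • Finsupp.single S 1 := by
      intro j hj
      rw [← Finset.sum_sub_distrib]
      rw [Finset.sum_eq_single_of_mem j hj]
      · exact diag_term (k + j * r) S
      · intro i hit hij
        have hab : k + i * r ≠ k + j * r := fun hh => hij (aInj hr k hh)
        rw [cross_comm hab S, sub_self]
    have total := Finset.sum_congr rfl inner
    rw [Finset.sum_smul, ← total, Finset.sum_sub_distrib]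
    exact congrArg₂ (· - ·) rfl Finset.sum_comm
end
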